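/- Let G be a connected chordal graph with clique-cut X and let P, Q, R be three longest paths of G, each crossing X and each closed with respect to X (both end vertices in its home component), with pairwise distinct home components C_P, C_Q, C_R, and pairwise disjoint intersections with X. Then such a configuration is impossible: one can reassemble pieces of P, Q, R using edges of X into three paths whose total length exceeds |P|+|Q|+|R|, contradicting maximality. -/

import Mathlib

open SimpleGraph

def IsChordal {V : Type*} (G : SimpleGraph V) : Prop :=
  ∀ ⦃u : V⦄ (c : G.Walk u u), c.IsCycle → 4 ≤ c.length →
    ∃ x y : V, x ∈ c.support ∧ y ∈ c.support ∧ G.Adj x y ∧ s(x, y) ∉ c.edges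

def IsDetour {V : Type*} (G : SimpleGraph V) {u v : V} (P : G.Walk u v) : Prop :=
  P.IsPath ∧ ∀ ⦃x y : V⦄ (Q : G.Walk x y), Q.IsPath → Q.length ≤ P.length

def avoid {V : Type*} (G : SimpleGraph V) (X : Set V) : SimpleGraph V where
  Adj a b := G.Adj a b ∧ a ∉ X ∧ b ∉ X
  symm := ⟨fun _ _ ⟨h, ha, hb⟩ => ⟨h.symm, hb, ha⟩⟩
  loopless := ⟨fun a ⟨h, _, _⟩ => G.loopless.irrefl a h⟩

/-- `P` crosses `X`: it has vertices in at least two components of `G − X`. -/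
def PathCrosses {V : Type*} (G : SimpleGraph V) (X : Set V) {u v : V} (P : G.Walk u v) : Prop :=
  ∃ a ∈ P.support, ∃ b ∈ P.support, a ∉ X ∧ b ∉ X ∧ ¬(avoid G X).Reachable a b

namespace NoThreeAux

variable {V : Type*} {G : SimpleGraph V}

lemma getLast?_cons_concat {α : Type*} (x y : α) (L : List α) :
    (x :: (L ++ [y])).getLast? = some y := by
  rw [← List.cons_append, List.getLast?_concat]

lemma dropLast_cons_concat {α : Type*} (x y : α) (L : List α) :
    (x :: (L ++ [y])).dropLast = x :: L := by
  rw [← List.cons_append, List.dropLast_concat]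

structure TP (G : SimpleGraph V) where
  t : Fin 3
  A : V
  B : V
  w : G.Walk A B

namespace TP
def len (x : TP G) : ℕ := x.w.length
def sup (x : TP G) : List V := x.w.support
end TP

def lensum (L : List (TP G)) : ℕ := (L.map TP.len).sum

@[simp] lemma lensum_nil : lensum ([] : List (TP G)) = 0 := rfl
@[simp] lemma lensum_cons (x : TP G) (L : List (TP G)) :
    lensum (x :: L) = x.len + lensum L := by simp [lensum]
@[simp] lemma lensum_append (L₁ L₂ : List (TP G)) :
    lensum (L₁ ++ L₂) = lensum L₁ + lensum L₂ := by simp [lensum]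

/-- split relation: two pieces share a vertex only if it is the junction and tags differ -/
def SR (x y : TP G) : Prop :=
  ∀ v, v ∈ x.sup → v ∈ y.sup → v = x.B ∧ v = y.A ∧ x.t ≠ y.t

structure SplitData (g : V → Fin 3) (X : Set V) {a b : V} (w : G.Walk a b) where
  L : List (TP G)
  ne : L ≠ []
  paths : ∀ x ∈ L, x.w.IsPath
  sub : ∀ x ∈ L, ∀ v ∈ x.sup, v ∈ w.support
  tag : ∀ x ∈ L, ∀ v ∈ x.sup, v ∉ X → g v = x.t
  total : lensum L = w.length
  headA : ∀ h, L.head? = some h → h.A = a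
  headT : ∀ h, L.head? = some h → a ∉ X → h.t = g a
  lastB : ∀ z, L.getLast? = some z → z.B = b
  lastT : ∀ z, L.getLast? = some z → z.t = g b
  dl : ∀ x ∈ L.dropLast, x.B ∈ X
  tl : ∀ x ∈ L.tail, x.A ∈ X
  pw : List.Pairwise SR L
  nn : ∀ x ∈ L, ¬x.w.Nil ∨ L = [x]

lemma split_exists (g : V → Fin 3) (X : Set V)
    (hg : ∀ ⦃u v⦄, G.Adj u v → u ∉ X → v ∉ X → g u = g v) :
    ∀ {a b : V} (w : G.Walk a b), w.IsPath → b ∉ X → Nonempty (SplitData g X w) := by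
  intro a b w
  induction w with
  | nil =>
    rename_i b
    intro _ hb
    refine ⟨⟨[⟨g b, b, b, Walk.nil⟩], by simp, ?_, ?_, ?_, ?_, ?_, ?_, ?_, ?_, ?_, ?_, ?_, ?_⟩⟩
    · rintro x hx; simp at hx; subst hx; exact Walk.IsPath.nil
    · rintro x hx v hv; simp at hx; subst hx; simpa [TP.sup] using hv
    · rintro x hx v hv hvX; simp at hx; subst hx; simp [TP.sup] at hv; subst hv; rfl
    · simp [TP.len]
    · rintro h hh; simp at hh; subst hh; rfl
    · rintro h hh _; simp at hh; subst hh; rfl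
    · rintro z hz; simp at hz; subst hz; rfl
    · rintro z hz; simp at hz; subst hz; rfl
    · rintro x hx; simp at hx
    · rintro x hx; simp at hx
    · simp
    · rintro x hx; simp at hx; subst hx; right; rfl
  | @cons a a' b h p ih =>
    intro hw hb
    have hp : p.IsPath := hw.of_cons
    have haP : a ∉ p.support := ((Walk.cons_isPath_iff h p).mp hw).2
    obtain ⟨D⟩ := ih hp hb
    obtain ⟨L, ne, paths, sub, tag, total, headA, headT, lastB, lastT, dl, tl, pw, nn⟩ := D
    match L, ne, paths, sub, tag, total, headA, headT, lastB, lastT, dl, tl, pw, nn with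
    | x :: L₂, _, paths, sub, tag, total, headA, headT, lastB, lastT, dl, tl, pw, nn =>
    have hxA : x.A = a' := headA x rfl
    obtain ⟨t₀, A₀, B₀, w₀⟩ := x
    simp only at hxA
    subst hxA
    have pathx : w₀.IsPath := paths _ (List.mem_cons_self)
    have subx : ∀ v ∈ w₀.support, v ∈ p.support := sub _ (List.mem_cons_self)
    have nnL₂ : ∀ y ∈ L₂, ¬y.w.Nil := by
      intro y hy
      rcases nn y (List.mem_cons_of_mem _ hy) with h' | h'
      · exact h'
      · exfalso
        have : L₂ = [] := by
          have := congrArg List.tail h'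
          simpa using this
        rw [this] at hy; simp at hy
    by_cases hm : a ∈ X ∨ t₀ = g a
    · -- MERGE
      refine ⟨⟨⟨t₀, a, B₀, Walk.cons h w₀⟩ :: L₂, by simp,
        ?_, ?_, ?_, ?_, ?_, ?_, ?_, ?_, ?_, ?_, ?_, ?_⟩⟩
      · rintro y hy
        rcases List.mem_cons.mp hy with rfl | hy
        · exact (Walk.cons_isPath_iff _ _).mpr ⟨pathx, fun hc => haP (subx a hc)⟩
        · exact paths y (List.mem_cons_of_mem _ hy)
      · rintro y hy v hv
        simp only [Walk.support_cons]
        rcases List.mem_cons.mp hy with rfl | hy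
        · simp only [TP.sup, Walk.support_cons] at hv
          rcases List.mem_cons.mp hv with rfl | hv
          · exact List.mem_cons_self
          · exact List.mem_cons_of_mem _ (subx v hv)
        · exact List.mem_cons_of_mem _ (sub y (List.mem_cons_of_mem _ hy) v hv)
      · rintro y hy v hv hvX
        rcases List.mem_cons.mp hy with rfl | hy
        · simp only [TP.sup, Walk.support_cons] at hv
          rcases List.mem_cons.mp hv with rfl | hv
          · rcases hm with hm | hm
            · exact absurd hm hvX
            · exact hm.symm
          · exact tag _ (List.mem_cons_self) v hv hvX
        · exact tag y (List.mem_cons_of_mem _ hy) v hv hvX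
      · simp only [lensum_cons, TP.len, Walk.length_cons] at total ⊢
        omega
      · rintro h' hh'; simp at hh'; subst hh'; rfl
      · rintro h' hh' haX; simp at hh'; subst hh'
        rcases hm with hm' | hm'
        · exact absurd hm' haX
        · exact hm'
      · rintro z hz
        rcases L₂.eq_nil_or_concat with rfl | ⟨L', y, hconc⟩
        · rw [show ([⟨t₀, a, B₀, Walk.cons h w₀⟩] : List (TP G)) = [] ++ [⟨t₀, a, B₀, Walk.cons h w₀⟩] from rfl, List.getLast?_concat] at hz
          cases hz
          exact lastB ⟨t₀, A₀, B₀, w₀⟩ (by rw [show ([⟨t₀, A₀, B₀, w₀⟩] : List (TP G)) = [] ++ [⟨t₀, A₀, B₀, w₀⟩] from rfl, List.getLast?_concat])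
        · rw [List.concat_eq_append] at hconc; subst hconc
          rw [getLast?_cons_concat] at hz
          exact lastB z (by rw [getLast?_cons_concat]; exact hz)
      · rintro z hz
        rcases L₂.eq_nil_or_concat with rfl | ⟨L', y, hconc⟩
        · rw [show ([⟨t₀, a, B₀, Walk.cons h w₀⟩] : List (TP G)) = [] ++ [⟨t₀, a, B₀, Walk.cons h w₀⟩] from rfl, List.getLast?_concat] at hz
          cases hz
          exact lastT ⟨t₀, A₀, B₀, w₀⟩ (by rw [show ([⟨t₀, A₀, B₀, w₀⟩] : List (TP G)) = [] ++ [⟨t₀, A₀, B₀, w₀⟩] from rfl, List.getLast?_concat])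
        · rw [List.concat_eq_append] at hconc; subst hconc
          rw [getLast?_cons_concat] at hz
          exact lastT z (by rw [getLast?_cons_concat]; exact hz)
      · rintro y hy
        rcases L₂.eq_nil_or_concat with rfl | ⟨L', z, hconc⟩
        · simp at hy
        · rw [List.concat_eq_append] at hconc; subst hconc
          rw [dropLast_cons_concat] at hy
          rcases List.mem_cons.mp hy with rfl | hy
          · exact dl ⟨t₀, A₀, B₀, w₀⟩ (by rw [dropLast_cons_concat]; exact List.mem_cons_self)
          · exact dl y (by rw [dropLast_cons_concat]; exact List.mem_cons_of_mem _ hy)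
      · rintro y hy
        exact tl y hy
      · rcases List.pairwise_cons.mp pw with ⟨hx2, pw2⟩
        refine List.pairwise_cons.mpr ⟨?_, pw2⟩
        rintro y hy v hv hv'
        simp only [TP.sup, Walk.support_cons] at hv
        rcases List.mem_cons.mp hv with rfl | hv
        · exact absurd (sub y (List.mem_cons_of_mem _ hy) v hv') haP
        · exact hx2 y hy v hv hv'
      · rintro y hy
        rcases List.mem_cons.mp hy with rfl | hy
        · left; exact Walk.not_nil_cons
        · left; exact nnL₂ y hy
    · -- CUT
      push_neg at hm
      obtain ⟨haX, htne⟩ := hm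
      have hcX : A₀ ∈ X := by
        by_contra hcX
        exact htne ((headT _ rfl hcX).trans (hg h haX hcX).symm)
      have hxnn : ¬w₀.Nil := by
        rcases nn _ (List.mem_cons_self) with h' | h'
        · exact h'
        · intro hNil
          have hL₂ : L₂ = [] := by
            have := congrArg List.tail h'; simpa using this
          subst hL₂
          have hBb : B₀ = b := lastB _ rfl
          have : A₀ = B₀ := Walk.eq_of_length_eq_zero (Walk.nil_iff_length_eq.mp hNil)
          rw [this, hBb] at hcX
          exact hb hcX
      refine ⟨⟨⟨g a, a, A₀, Walk.cons h Walk.nil⟩ :: ⟨t₀, A₀, B₀, w₀⟩ :: L₂, by simp,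
        ?_, ?_, ?_, ?_, ?_, ?_, ?_, ?_, ?_, ?_, ?_, ?_⟩⟩
      · rintro y hy
        rcases List.mem_cons.mp hy with rfl | hy
        · simp [Walk.isPath_def, h.ne]
        · exact paths y hy
      · rintro y hy v hv
        simp only [Walk.support_cons]
        rcases List.mem_cons.mp hy with rfl | hy
        · simp only [TP.sup, Walk.support_cons, Walk.support_nil] at hv
          rcases List.mem_cons.mp hv with rfl | hv
          · exact List.mem_cons_self
          · simp at hv; subst hv
            exact List.mem_cons_of_mem _ (Walk.start_mem_support p)
        · exact List.mem_cons_of_mem _ (sub y hy v hv)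
      · rintro y hy v hv hvX
        rcases List.mem_cons.mp hy with rfl | hy
        · simp only [TP.sup, Walk.support_cons, Walk.support_nil] at hv
          rcases List.mem_cons.mp hv with rfl | hv
          · rfl
          · simp at hv; subst hv; exact absurd hcX hvX
        · exact tag y hy v hv hvX
      · simp only [lensum_cons, TP.len, Walk.length_cons, Walk.length_nil] at total ⊢
        omega
      · rintro h' hh'; simp at hh'; subst hh'; rfl
      · rintro h' hh' _; simp at hh'; subst hh'; rfl
      · rintro z hz
        rw [List.getLast?_cons_cons] at hz
        exact lastB z hz
      · rintro z hz
        rw [List.getLast?_cons_cons] at hz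
        exact lastT z hz
      · rintro y hy
        rw [List.dropLast_cons₂] at hy
        rcases List.mem_cons.mp hy with rfl | hy
        · exact hcX
        · exact dl y hy
      · rintro y hy
        rcases List.mem_cons.mp hy with rfl | hy
        · exact hcX
        · exact tl y hy
      · refine List.pairwise_cons.mpr ⟨?_, pw⟩
        rintro y hy v hv hv'
        simp only [TP.sup, Walk.support_cons, Walk.support_nil] at hv
        have hvsub : v ∈ p.support := sub y hy v hv'
        rcases List.mem_cons.mp hv with rfl | hv
        · exact absurd hvsub haP
        · simp at hv; subst hv
          rcases List.mem_cons.mp hy with rfl | hy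
          · exact ⟨rfl, rfl, fun hc => htne hc.symm⟩
          · exfalso
            have hSR : SR ⟨t₀, v, B₀, w₀⟩ y := (List.pairwise_cons.mp pw).1 y hy
            have := hSR v (Walk.start_mem_support _) hv'
            have hAB : v = B₀ := by simpa [TP.sup] using this.1
            have : w₀.Nil := by
              rw [Walk.nil_iff_length_eq]
              have hpath := pathx
              subst hAB
              exact Walk.isPath_iff_eq_nil.mp hpath ▸ rfl
            exact hxnn this
      · rintro y hy
        rcases List.mem_cons.mp hy with rfl | hy
        · left; exact Walk.not_nil_cons
        · left
          rcases List.mem_cons.mp hy with rfl | hy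
          · exact hxnn
          · exact nnL₂ y hy

/-- "no shared vertex" relation. -/
def NS (x y : TP G) : Prop := ∀ v, v ∈ x.sup → v ∈ y.sup → False

lemma NS.symm' {x y : TP G} (h : NS x y) : NS y x := fun v hv hv' => h v hv' hv

/-- Chaining pairwise-disjoint paths whose junction endpoints lie in a clique `X`. -/
lemma chain_exists {X : Set V} (hX : G.IsClique X) :
    ∀ (L : List (TP G)) (x : TP G),
      (∀ y ∈ x :: L, y.w.IsPath) →
      List.Pairwise NS (x :: L) →
      (∀ y ∈ (x :: L).dropLast, y.B ∈ X) →
      (∀ y ∈ L, y.A ∈ X) →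
      ∃ (c : V) (w : G.Walk x.A c), w.IsPath ∧
        (∀ v ∈ w.support, ∃ y ∈ x :: L, v ∈ y.sup) ∧
        w.length + 1 = lensum (x :: L) + (x :: L).length := by
  intro L
  induction L with
  | nil =>
    intro x hp _ _ _
    exact ⟨x.B, x.w, hp x (by simp), fun v hv => ⟨x, by simp, hv⟩, by simp [TP.len]⟩
  | cons y L ih =>
    intro x hp hpw hdl htl
    obtain ⟨c, w', hw'path, hw'sup, hw'len⟩ :=
      ih y (fun z hz => hp z (by simp at hz ⊢; tauto))
        (hpw.tail)
        (by
          intro z hz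
          apply hdl
          rw [List.dropLast_cons₂]
          exact List.mem_cons_of_mem _ hz)
        (fun z hz => htl z (by simp [hz]))
    have hxB : x.B ∈ X := by
      apply hdl
      rw [List.dropLast_cons₂]
      exact List.mem_cons_self
    have hyA : y.A ∈ X := htl y (by simp)
    have hNSxy : NS x y := (List.pairwise_cons.mp hpw).1 y (by simp)
    have hNSall : ∀ z ∈ y :: L, NS x z := (List.pairwise_cons.mp hpw).1
    have hne : x.B ≠ y.A := by
      intro h
      exact hNSxy x.B (Walk.end_mem_support _) (h ▸ Walk.start_mem_support _)
    have hadj : G.Adj x.B y.A := hX hxB hyA hne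
    refine ⟨c, x.w.append (Walk.cons hadj w'), ?_, ?_, ?_⟩
    · rw [Walk.isPath_def, Walk.support_append]
      refine List.Nodup.append ((hp x (by simp)).support_nodup) ?_ ?_
      · have := hw'path.support_nodup
        simpa using this
      · intro v hv hv'
        simp only [Walk.support_cons, List.tail_cons] at hv'
        obtain ⟨z, hz, hvz⟩ := hw'sup v hv'
        exact hNSall z hz v hv hvz
    · intro v hv
      rw [Walk.support_append] at hv
      rcases List.mem_append.mp hv with hv | hv
      · exact ⟨x, by simp, hv⟩
      · simp only [Walk.support_cons, List.tail_cons] at hv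
        obtain ⟨z, hz, hvz⟩ := hw'sup v hv
        exact ⟨z, by simp at hz ⊢; tauto, hvz⟩
    · rw [Walk.length_append, Walk.length_cons]
      simp only [lensum_cons, List.length_cons, TP.len] at hw'len ⊢
      omega

lemma fin3_cases (u : Fin 3) : u = 0 ∨ u = 1 ∨ u = 2 := by fin_cases u <;> simp

lemma mem_tail_of_tag {t : Fin 3} {L : List (TP G)} {x : TP G} (hx : x ∈ L) (ht : x.t = t)
    (hh : ∀ h, L.head? = some h → h.t ≠ t) : x ∈ L.tail := by
  cases L with
  | nil => simp at hx
  | cons y L' =>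
    rcases List.mem_cons.mp hx with rfl | hx
    · exact absurd ht (hh x rfl)
    · exact hx

lemma mem_dropLast_of_tag {t : Fin 3} {L : List (TP G)} {x : TP G} (hx : x ∈ L) (ht : x.t = t)
    (hl : ∀ z, L.getLast? = some z → z.t ≠ t) : x ∈ L.dropLast := by
  rcases L.eq_nil_or_concat with rfl | ⟨L', z, hconc⟩
  · simp at hx
  · rw [List.concat_eq_append] at hconc; subst hconc
    rw [List.dropLast_concat]
    rcases List.mem_append.mp hx with hx | hx
    · exact hx
    · simp at hx; subst hx
      exact absurd ht (hl x List.getLast?_concat)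

/-- If the split is a single piece, it covers the whole support. -/
lemma single_covers {g : V → Fin 3} {X : Set V} {a b : V} {w : G.Walk a b}
    (D : SplitData g X w) (hw : w.IsPath) {x : TP G} (hL : D.L = [x]) :
    ∀ v ∈ w.support, v ∈ x.sup := by
  classical
  intro v hv
  have hsub : x.sup ⊆ w.support := fun u hu => D.sub x (by simp [hL]) u hu
  have hlen : x.len = w.length := by
    have := D.total
    rw [hL] at this
    simpa using this
  have hnodup : x.sup.Nodup := (D.paths x (by simp [hL])).support_nodup
  have hwnodup : w.support.Nodup := hw.support_nodup
  have hcard : x.sup.toFinset.card = w.support.toFinset.card := by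
    rw [List.toFinset_card_of_nodup hnodup, List.toFinset_card_of_nodup hwnodup]
    show x.w.support.length = w.support.length
    rw [Walk.length_support, Walk.length_support]
    simpa [TP.len] using hlen
  have hfsub : x.sup.toFinset ⊆ w.support.toFinset := by
    intro u hu
    rw [List.mem_toFinset] at hu ⊢
    exact hsub hu
  have : x.sup.toFinset = w.support.toFinset := Finset.eq_of_subset_of_card_le hfsub (le_of_eq hcard.symm)
  rw [← List.mem_toFinset, ← this, List.mem_toFinset] at hv
  exact hv

lemma two_le_of_bad {g : V → Fin 3} {X : Set V} {a b : V} {w : G.Walk a b}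
    (D : SplitData g X w) (hw : w.IsPath) (ha : a ∉ X)
    {v₀ : V} (hv₀ : v₀ ∈ w.support) (hv₀X : v₀ ∉ X) (hbad : g v₀ ≠ g a) :
    2 ≤ D.L.length := by
  by_contra hlt
  push_neg at hlt
  interval_cases h : D.L.length
  · exact D.ne (List.length_eq_zero_iff.mp h)
  · obtain ⟨x, hx⟩ := List.length_eq_one_iff.mp h
    have hmem : v₀ ∈ x.sup := single_covers D hw hx v₀ hv₀
    have ht : g v₀ = x.t := D.tag x (by simp [hx]) v₀ hmem hv₀X
    have hht : x.t = g a := D.headT x (by rw [hx]; rfl) ha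
    exact hbad (ht.trans hht)

set_option maxHeartbeats 1000000 in
lemma target_path {X : Set V} (hX : G.IsClique X) (t : Fin 3)
    {gH gA gB : V → Fin 3}
    {a₁ a₂ b₁ b₂ c₁ c₂ : V} {WH : G.Walk a₁ a₂} {WA : G.Walk b₁ b₂} {WB : G.Walk c₁ c₂}
    (DH : SplitData gH X WH) (DA : SplitData gA X WA) (DB : SplitData gB X WB)
    (h2 : 2 ≤ DH.L.length)
    (hHh : ∀ h, DH.L.head? = some h → h.t = t)
    (hHl : ∀ z, DH.L.getLast? = some z → z.t = t)
    (hAh : ∀ h, DA.L.head? = some h → h.t ≠ t)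
    (hAl : ∀ z, DA.L.getLast? = some z → z.t ≠ t)
    (hBh : ∀ h, DB.L.head? = some h → h.t ≠ t)
    (hBl : ∀ z, DB.L.getLast? = some z → z.t ≠ t)
    (nsHA : ∀ x ∈ DH.L, ∀ y ∈ DA.L, x.t = t → y.t = t → NS x y)
    (nsHB : ∀ x ∈ DH.L, ∀ y ∈ DB.L, x.t = t → y.t = t → NS x y)
    (nsAB : ∀ x ∈ DA.L, ∀ y ∈ DB.L, x.t = t → y.t = t → NS x y) :
    ∃ (u c : V) (N : G.Walk u c), N.IsPath ∧
      N.length + 1 =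
        lensum (DH.L.filter (fun x => x.t = t)) + lensum (DA.L.filter (fun x => x.t = t)) +
          lensum (DB.L.filter (fun x => x.t = t)) +
        ((DH.L.filter (fun x => x.t = t)).length + (DA.L.filter (fun x => x.t = t)).length +
          (DB.L.filter (fun x => x.t = t)).length) := by
  classical
  obtain ⟨hh, rest, hLH⟩ : ∃ hh rest, DH.L = hh :: rest := by
    cases hL : DH.L with
    | nil => rw [hL] at h2; simp at h2
    | cons a l => exact ⟨a, l, rfl⟩
  have hrest : rest ≠ [] := by
    intro h; rw [h] at hLH; rw [hLH] at h2; simp at h2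
  obtain ⟨hm, hl, hconc⟩ : ∃ hm hl, rest = hm ++ [hl] := by
    rcases rest.eq_nil_or_concat with h | ⟨l, z, h⟩
    · exact absurd h hrest
    · rw [List.concat_eq_append] at h; exact ⟨l, z, h⟩
  subst hconc
  have hht : hh.t = t := hHh hh (by rw [hLH]; rfl)
  have hlt : hl.t = t := hHl hl (by rw [hLH, getLast?_cons_concat])
  set FH := hm.filter (fun x => x.t = t) with hFH
  set FA := DA.L.filter (fun x => x.t = t) with hFA
  set FB := DB.L.filter (fun x => x.t = t) with hFB
  have hhmem : hh ∈ DH.L := by rw [hLH]; exact List.mem_cons_self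
  have hlmem : hl ∈ DH.L := by rw [hLH]; simp
  have memFH : ∀ z ∈ FH, z ∈ DH.L ∧ z.t = t := by
    intro z hz
    have h' := List.mem_filter.mp hz
    refine ⟨by rw [hLH]; exact List.mem_cons_of_mem _ (List.mem_append_left _ h'.1), by simpa using h'.2⟩
  have memFA : ∀ z ∈ FA, z ∈ DA.L ∧ z.t = t := by
    intro z hz
    have h' := List.mem_filter.mp hz
    exact ⟨h'.1, by simpa using h'.2⟩
  have memFB : ∀ z ∈ FB, z ∈ DB.L ∧ z.t = t := by
    intro z hz
    have h' := List.mem_filter.mp hz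
    exact ⟨h'.1, by simpa using h'.2⟩
  -- same-list same-tag pieces do not meet
  have key : ∀ {LL : List (TP G)}, List.Pairwise SR LL →
      List.Pairwise (fun x y => x.t = t → y.t = t → NS x y) LL := by
    intro LL pw
    exact pw.imp (fun hSR hx hy v hvx hvy => (hSR v hvx hvy).2.2 (hx.trans hy.symm))
  -- pairwise NS on the home sublist hh :: (FH ++ [hl])
  have subW : (hh :: (FH ++ [hl])).Sublist DH.L := by
    rw [hLH]
    exact (List.Sublist.append List.filter_sublist (List.Sublist.refl [hl])).cons₂ hh
  have tagW : ∀ x ∈ hh :: (FH ++ [hl]), x.t = t := by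
    intro x hx
    rcases List.mem_cons.mp hx with rfl | hx
    · exact hht
    · rcases List.mem_append.mp hx with hx | hx
      · exact (memFH x hx).2
      · simp at hx; subst hx; exact hlt
  have pwWNS : List.Pairwise NS (hh :: (FH ++ [hl])) := by
    refine ((key DH.pw).sublist subW).imp_of_mem ?_
    intro x y hx hy hcond
    exact hcond (tagW x hx) (tagW y hy)
  have pwFA : List.Pairwise NS FA := by
    refine ((key DA.pw).sublist List.filter_sublist).imp_of_mem ?_
    intro x y hx hy hcond
    exact hcond (memFA x hx).2 (memFA y hy).2
  have pwFB : List.Pairwise NS FB := by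
    refine ((key DB.pw).sublist List.filter_sublist).imp_of_mem ?_
    intro x y hx hy hcond
    exact hcond (memFB x hx).2 (memFB y hy).2
  have pwW1 := List.pairwise_cons.mp pwWNS
  have pwW2 := List.pairwise_append.mp pwW1.2
  -- the chained list
  have hpaths : ∀ y ∈ hh :: (FH ++ (FA ++ (FB ++ [hl]))), y.w.IsPath := by
    intro y hy
    rcases List.mem_cons.mp hy with rfl | hy
    · exact DH.paths _ hhmem
    · rcases List.mem_append.mp hy with hy | hy
      · exact DH.paths _ (memFH y hy).1
      · rcases List.mem_append.mp hy with hy | hy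
        · exact DA.paths _ (memFA y hy).1
        · rcases List.mem_append.mp hy with hy | hy
          · exact DB.paths _ (memFB y hy).1
          · simp at hy; subst hy; exact DH.paths _ hlmem
  have hpw : List.Pairwise NS (hh :: (FH ++ (FA ++ (FB ++ [hl])))) := by
    refine List.pairwise_cons.mpr ⟨?_, ?_⟩
    · intro z hz
      rcases List.mem_append.mp hz with hz | hz
      · exact pwW1.1 z (List.mem_append_left _ hz)
      · rcases List.mem_append.mp hz with hz | hz
        · exact nsHA hh hhmem z (memFA z hz).1 hht (memFA z hz).2
        · rcases List.mem_append.mp hz with hz | hz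
          · exact nsHB hh hhmem z (memFB z hz).1 hht (memFB z hz).2
          · simp at hz
            rw [hz]
            exact pwW1.1 hl (List.mem_append_right _ (by simp))
    · refine List.pairwise_append.mpr ⟨pwW2.1, ?_, ?_⟩
      · refine List.pairwise_append.mpr ⟨pwFA, ?_, ?_⟩
        · refine List.pairwise_append.mpr ⟨pwFB, List.pairwise_singleton _ _, ?_⟩
          · intro x hx y hy
            simp at hy
            rw [hy]
            exact (nsHB hl hlmem x (memFB x hx).1 hlt (memFB x hx).2).symm'
        · intro x hx y hy
          rcases List.mem_append.mp hy with hy | hy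
          · exact nsAB x (memFA x hx).1 y (memFB y hy).1 (memFA x hx).2 (memFB y hy).2
          · simp at hy
            rw [hy]
            exact (nsHA hl hlmem x (memFA x hx).1 hlt (memFA x hx).2).symm'
      · intro x hx y hy
        rcases List.mem_append.mp hy with hy | hy
        · exact nsHA x (memFH x hx).1 y (memFA y hy).1 (memFH x hx).2 (memFA y hy).2
        · rcases List.mem_append.mp hy with hy | hy
          · exact nsHB x (memFH x hx).1 y (memFB y hy).1 (memFH x hx).2 (memFB y hy).2
          · simp at hy
            rw [hy]
            exact pwW2.2.2 x hx hl (by simp)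
  have hdl : ∀ y ∈ (hh :: (FH ++ (FA ++ (FB ++ [hl])))).dropLast, y.B ∈ X := by
    have hshape : FH ++ (FA ++ (FB ++ [hl])) = (FH ++ FA ++ FB) ++ [hl] := by
      simp [List.append_assoc]
    intro y hy
    rw [show (hh :: (FH ++ (FA ++ (FB ++ [hl])))) = hh :: ((FH ++ FA ++ FB) ++ [hl]) by rw [hshape],
      dropLast_cons_concat] at hy
    have hDHdl : DH.L.dropLast = hh :: hm := by
      rw [hLH, dropLast_cons_concat]
    rcases List.mem_cons.mp hy with rfl | hy
    · exact DH.dl y (by rw [hDHdl]; exact List.mem_cons_self)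
    · rcases List.mem_append.mp hy with hy | hy
      · rcases List.mem_append.mp hy with hy | hy
        · exact DH.dl y (by
            rw [hDHdl]
            exact List.mem_cons_of_mem _ (List.mem_of_mem_filter hy))
        · exact DA.dl y (mem_dropLast_of_tag (memFA y hy).1 (memFA y hy).2 hAl)
      · exact DB.dl y (mem_dropLast_of_tag (memFB y hy).1 (memFB y hy).2 hBl)
  have htl : ∀ y ∈ FH ++ (FA ++ (FB ++ [hl])), y.A ∈ X := by
    have hDHtl : DH.L.tail = hm ++ [hl] := by rw [hLH]; rfl
    intro y hy
    rcases List.mem_append.mp hy with hy | hy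
    · exact DH.tl y (by rw [hDHtl]; exact List.mem_append_left _ (List.mem_of_mem_filter hy))
    · rcases List.mem_append.mp hy with hy | hy
      · exact DA.tl y (mem_tail_of_tag (memFA y hy).1 (memFA y hy).2 hAh)
      · rcases List.mem_append.mp hy with hy | hy
        · exact DB.tl y (mem_tail_of_tag (memFB y hy).1 (memFB y hy).2 hBh)
        · simp at hy
          rw [hy]
          exact DH.tl hl (by rw [hDHtl]; exact List.mem_append_right _ (by simp))
  obtain ⟨c, N, hNpath, _, hNlen⟩ :=
    chain_exists hX (FH ++ (FA ++ (FB ++ [hl]))) hh hpaths hpw hdl htl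
  refine ⟨hh.A, c, N, hNpath, ?_⟩
  have hfiltH : DH.L.filter (fun x => x.t = t) = hh :: (FH ++ [hl]) := by
    rw [hLH]
    simp only [List.filter_cons, List.filter_append, hht, hlt]
    simp [hFH]
  rw [hfiltH, hNlen]
  simp only [lensum_cons, lensum_append, List.length_cons, List.length_append,
    lensum_nil, List.length_nil]
  simp [lensum, TP.len]
  omega

attribute [local instance] Classical.propDecidable

noncomputable def grp (R1 R2 : V → Prop) (t1 t2 t3 : Fin 3) (v : V) : Fin 3 :=
  if R1 v then t1 else if R2 v then t2 else t3

lemma grp_val1 {R1 R2 : V → Prop} {t1 t2 t3 : Fin 3} {v : V} (h : R1 v) :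
    grp R1 R2 t1 t2 t3 v = t1 := by simp [grp, h]

lemma grp_val2 {R1 R2 : V → Prop} {t1 t2 t3 : Fin 3} {v : V} (h1 : ¬R1 v) (h2 : R2 v) :
    grp R1 R2 t1 t2 t3 v = t2 := by simp [grp, h1, h2]

lemma grp_val3 {R1 R2 : V → Prop} {t1 t2 t3 : Fin 3} {v : V} (h1 : ¬R1 v) (h2 : ¬R2 v) :
    grp R1 R2 t1 t2 t3 v = t3 := by simp [grp, h1, h2]

lemma grp_congr {R1 R2 : V → Prop} {t1 t2 t3 : Fin 3} {u v : V} (h1 : R1 u ↔ R1 v)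
    (h2 : R2 u ↔ R2 v) :
    grp R1 R2 t1 t2 t3 u = grp R1 R2 t1 t2 t3 v := by
  by_cases a : R1 v
  · rw [grp_val1 (h1.mpr a), grp_val1 a]
  · by_cases b : R2 v
    · rw [grp_val2 (fun c => a (h1.mp c)) (h2.mpr b), grp_val2 a b]
    · rw [grp_val3 (fun c => a (h1.mp c)) (fun c => b (h2.mp c)), grp_val3 a b]

lemma filter_partition (L : List (TP G)) :
    ((L.filter (fun x => x.t = 0)).length + (L.filter (fun x => x.t = 1)).length +
      (L.filter (fun x => x.t = 2)).length = L.length) ∧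
    (lensum (L.filter (fun x => x.t = 0)) + lensum (L.filter (fun x => x.t = 1)) +
      lensum (L.filter (fun x => x.t = 2)) = lensum L) := by
  induction L with
  | nil => simp
  | cons x l ih =>
    obtain ⟨ih1, ih2⟩ := ih
    have e01 : ((0:Fin 3) = 1) = False := by simp
    have e02 : ((0:Fin 3) = 2) = False := by simp
    have e10 : ((1:Fin 3) = 0) = False := by simp
    have e12 : ((1:Fin 3) = 2) = False := by simp
    have e20 : ((2:Fin 3) = 0) = False := by simp
    have e21 : ((2:Fin 3) = 1) = False := by simp
    rcases fin3_cases x.t with h | h | h <;>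
    · simp only [List.filter_cons, h, e01, e02, e10, e12, e20, e21, decide_false, decide_true,
        if_false, if_true, Bool.false_eq_true, ite_false, ite_true]
      simp only [List.length_cons, lensum_cons]
      constructor <;> omega

end NoThreeAux

open NoThreeAux

attribute [local instance] Classical.propDecidable

/-- Three closed crossing longest paths with pairwise distinct home components and
pairwise disjoint intersections with a clique-cut `X` cannot exist. -/
theorem no_three_closed_crossing_detours {V : Type*} [Fintype V] (G : SimpleGraph V)
    (hconn : G.Connected) (hchord : IsChordal G)
    (X : Set V) (hX : G.IsClique X)
    (hcut : ∃ a b : V, a ∉ X ∧ b ∉ X ∧ ¬(avoid G X).Reachable a b)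
    {p₁ p₂ q₁ q₂ r₁ r₂ : V}
    (P : G.Walk p₁ p₂) (Q : G.Walk q₁ q₂) (R : G.Walk r₁ r₂)
    (hP : IsDetour G P) (hQ : IsDetour G Q) (hR : IsDetour G R)
    (hPc : PathCrosses G X P) (hQc : PathCrosses G X Q) (hRc : PathCrosses G X R)
    -- each path is closed: both end vertices lie outside X, in the same component
    (hPcl : p₁ ∉ X ∧ p₂ ∉ X ∧ (avoid G X).Reachable p₁ p₂)
    (hQcl : q₁ ∉ X ∧ q₂ ∉ X ∧ (avoid G X).Reachable q₁ q₂)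
    (hRcl : r₁ ∉ X ∧ r₂ ∉ X ∧ (avoid G X).Reachable r₁ r₂)
    -- the home components are pairwise distinct
    (hPQ : ¬(avoid G X).Reachable p₁ q₁)
    (hPR : ¬(avoid G X).Reachable p₁ r₁)
    (hQR : ¬(avoid G X).Reachable q₁ r₁)
    -- the intersections with X are pairwise disjoint
    (dPQ : ∀ w ∈ X, ¬(w ∈ P.support ∧ w ∈ Q.support))
    (dPR : ∀ w ∈ X, ¬(w ∈ P.support ∧ w ∈ R.support))
    (dQR : ∀ w ∈ X, ¬(w ∈ Q.support ∧ w ∈ R.support)) :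
    False := by
  classical
  obtain ⟨hp₁X, hp₂X, hPre⟩ := hPcl
  obtain ⟨hq₁X, hq₂X, hQre⟩ := hQcl
  obtain ⟨hr₁X, hr₂X, hRre⟩ := hRcl
  set Rch : V → V → Prop := fun u v => (avoid G X).Reachable u v with hRch
  have hvPQ : ∀ v, Rch v p₁ → Rch v q₁ → False := fun v h1 h2 => hPQ (h1.symm.trans h2)
  have hvPR : ∀ v, Rch v p₁ → Rch v r₁ → False := fun v h1 h2 => hPR (h1.symm.trans h2)
  have hvQR : ∀ v, Rch v q₁ → Rch v r₁ → False := fun v h1 h2 => hQR (h1.symm.trans h2)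
  set gP : V → Fin 3 := grp (fun v => Rch v p₁) (fun v => Rch v q₁) 2 1 0 with hgPd
  set gQ : V → Fin 3 := grp (fun v => Rch v q₁) (fun v => Rch v r₁) 0 2 1 with hgQd
  set gR : V → Fin 3 := grp (fun v => Rch v r₁) (fun v => Rch v p₁) 1 0 2 with hgRd
  have hreach : ∀ ⦃u v : V⦄, G.Adj u v → u ∉ X → v ∉ X → Rch u v :=
    fun u v h hu hv => SimpleGraph.Adj.reachable (G := avoid G X) (And.intro h (And.intro hu hv) : G.Adj u v ∧ u ∉ X ∧ v ∉ X)
  have hcongr : ∀ (g : V → Fin 3), (g = gP ∨ g = gQ ∨ g = gR) →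
      ∀ ⦃u v⦄, G.Adj u v → u ∉ X → v ∉ X → g u = g v := by
    intro g hg u v h hu hv
    have hr : Rch u v := hreach h hu hv
    have h1 : ∀ w, Rch u w ↔ Rch v w := fun w => ⟨fun h' => hr.symm.trans h', fun h' => hr.trans h'⟩
    rcases hg with rfl | rfl | rfl
    · rw [hgPd]; exact grp_congr (h1 p₁) (h1 q₁)
    · rw [hgQd]; exact grp_congr (h1 q₁) (h1 r₁)
    · rw [hgRd]; exact grp_congr (h1 r₁) (h1 p₁)
  -- value lemmas
  have gPv1 : ∀ v : V, Rch v p₁ → gP v = 2 := fun v h => by rw [hgPd]; exact grp_val1 h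
  have gPv2 : ∀ v : V, ¬Rch v p₁ → Rch v q₁ → gP v = 1 := fun v h1 h2 => by
    rw [hgPd]; exact grp_val2 h1 h2
  have gPv3 : ∀ v : V, ¬Rch v p₁ → ¬Rch v q₁ → gP v = 0 := fun v h1 h2 => by
    rw [hgPd]; exact grp_val3 h1 h2
  have gQv1 : ∀ v : V, Rch v q₁ → gQ v = 0 := fun v h => by rw [hgQd]; exact grp_val1 h
  have gQv2 : ∀ v : V, ¬Rch v q₁ → Rch v r₁ → gQ v = 2 := fun v h1 h2 => by
    rw [hgQd]; exact grp_val2 h1 h2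
  have gQv3 : ∀ v : V, ¬Rch v q₁ → ¬Rch v r₁ → gQ v = 1 := fun v h1 h2 => by
    rw [hgQd]; exact grp_val3 h1 h2
  have gRv1 : ∀ v : V, Rch v r₁ → gR v = 1 := fun v h => by rw [hgRd]; exact grp_val1 h
  have gRv2 : ∀ v : V, ¬Rch v r₁ → Rch v p₁ → gR v = 0 := fun v h1 h2 => by
    rw [hgRd]; exact grp_val2 h1 h2
  have gRv3 : ∀ v : V, ¬Rch v r₁ → ¬Rch v p₁ → gR v = 2 := fun v h1 h2 => by
    rw [hgRd]; exact grp_val3 h1 h2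
  -- pairwise distinct tags for every vertex
  have hdist : ∀ v, gP v ≠ gQ v ∧ gP v ≠ gR v ∧ gQ v ≠ gR v := by
    intro v
    by_cases hp : Rch v p₁
    · have hq : ¬Rch v q₁ := fun h => hvPQ v hp h
      have hr : ¬Rch v r₁ := fun h => hvPR v hp h
      rw [gPv1 v hp, gQv3 v hq hr, gRv2 v hr hp]
      refine ⟨by decide, by decide, by decide⟩
    · by_cases hq : Rch v q₁
      · have hr : ¬Rch v r₁ := fun h => hvQR v hq h
        rw [gPv2 v hp hq, gQv1 v hq, gRv3 v hr hp]
        refine ⟨by decide, by decide, by decide⟩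
      · by_cases hr : Rch v r₁
        · rw [gPv3 v hp hq, gQv2 v hq hr, gRv1 v hr]
          refine ⟨by decide, by decide, by decide⟩
        · rw [gPv3 v hp hq, gQv3 v hq hr, gRv3 v hr hp]
          refine ⟨by decide, by decide, by decide⟩
  -- split data
  obtain ⟨DP⟩ := split_exists gP X (hcongr gP (Or.inl rfl)) P hP.1 hp₂X
  obtain ⟨DQ⟩ := split_exists gQ X (hcongr gQ (Or.inr (Or.inl rfl))) Q hQ.1 hq₂X
  obtain ⟨DR⟩ := split_exists gR X (hcongr gR (Or.inr (Or.inr rfl))) R hR.1 hr₂X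
  -- home tag values
  have hgPp₁ : gP p₁ = 2 := gPv1 p₁ (Reachable.refl _)
  have hgPp₂ : gP p₂ = 2 := gPv1 p₂ hPre.symm
  have hgQq₁ : gQ q₁ = 0 := gQv1 q₁ (Reachable.refl _)
  have hgQq₂ : gQ q₂ = 0 := gQv1 q₂ hQre.symm
  have hgRr₁ : gR r₁ = 1 := gRv1 r₁ (Reachable.refl _)
  have hgRr₂ : gR r₂ = 1 := gRv1 r₂ hRre.symm
  -- each split has at least two pieces
  have twoP : 2 ≤ DP.L.length := by
    obtain ⟨a', ha', b', hb', haX, hbX, hnr⟩ := hPc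
    by_cases hra : Rch a' p₁
    · have hrb : ¬Rch b' p₁ := fun h => hnr (hra.trans h.symm)
      refine two_le_of_bad DP hP.1 hp₁X hb' hbX ?_
      rw [hgPp₁]
      by_cases hq : Rch b' q₁
      · rw [gPv2 b' hrb hq]; decide
      · rw [gPv3 b' hrb hq]; decide
    · refine two_le_of_bad DP hP.1 hp₁X ha' haX ?_
      rw [hgPp₁]
      by_cases hq : Rch a' q₁
      · rw [gPv2 a' hra hq]; decide
      · rw [gPv3 a' hra hq]; decide
  have twoQ : 2 ≤ DQ.L.length := by
    obtain ⟨a', ha', b', hb', haX, hbX, hnr⟩ := hQc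
    by_cases hra : Rch a' q₁
    · have hrb : ¬Rch b' q₁ := fun h => hnr (hra.trans h.symm)
      refine two_le_of_bad DQ hQ.1 hq₁X hb' hbX ?_
      rw [hgQq₁]
      by_cases hr : Rch b' r₁
      · rw [gQv2 b' hrb hr]; decide
      · rw [gQv3 b' hrb hr]; decide
    · refine two_le_of_bad DQ hQ.1 hq₁X ha' haX ?_
      rw [hgQq₁]
      by_cases hr : Rch a' r₁
      · rw [gQv2 a' hra hr]; decide
      · rw [gQv3 a' hra hr]; decide
  have twoR : 2 ≤ DR.L.length := by
    obtain ⟨a', ha', b', hb', haX, hbX, hnr⟩ := hRc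
    by_cases hra : Rch a' r₁
    · have hrb : ¬Rch b' r₁ := fun h => hnr (hra.trans h.symm)
      refine two_le_of_bad DR hR.1 hr₁X hb' hbX ?_
      rw [hgRr₁]
      by_cases hp : Rch b' p₁
      · rw [gRv2 b' hrb hp]; decide
      · rw [gRv3 b' hrb hp]; decide
    · refine two_le_of_bad DR hR.1 hr₁X ha' haX ?_
      rw [hgRr₁]
      by_cases hp : Rch a' p₁
      · rw [gRv2 a' hra hp]; decide
      · rw [gRv3 a' hra hp]; decide
  -- cross-list no-sharing facts
  have nsPQ : ∀ (t : Fin 3), ∀ x ∈ DP.L, ∀ y ∈ DQ.L, x.t = t → y.t = t → NS x y := by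
    intro t x hx y hy hxt hyt v hvx hvy
    have hvP : v ∈ P.support := DP.sub x hx v hvx
    have hvQ : v ∈ Q.support := DQ.sub y hy v hvy
    by_cases hvX : v ∈ X
    · exact dPQ v hvX ⟨hvP, hvQ⟩
    · have h1 : gP v = t := by rw [← hxt]; exact DP.tag x hx v hvx hvX
      have h2 : gQ v = t := by rw [← hyt]; exact DQ.tag y hy v hvy hvX
      exact (hdist v).1 (h1.trans h2.symm)
  have nsPR : ∀ (t : Fin 3), ∀ x ∈ DP.L, ∀ y ∈ DR.L, x.t = t → y.t = t → NS x y := by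
    intro t x hx y hy hxt hyt v hvx hvy
    have hvP : v ∈ P.support := DP.sub x hx v hvx
    have hvR : v ∈ R.support := DR.sub y hy v hvy
    by_cases hvX : v ∈ X
    · exact dPR v hvX ⟨hvP, hvR⟩
    · have h1 : gP v = t := by rw [← hxt]; exact DP.tag x hx v hvx hvX
      have h2 : gR v = t := by rw [← hyt]; exact DR.tag y hy v hvy hvX
      exact (hdist v).2.1 (h1.trans h2.symm)
  have nsQR : ∀ (t : Fin 3), ∀ x ∈ DQ.L, ∀ y ∈ DR.L, x.t = t → y.t = t → NS x y := by
    intro t x hx y hy hxt hyt v hvx hvy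
    have hvQ : v ∈ Q.support := DQ.sub x hx v hvx
    have hvR : v ∈ R.support := DR.sub y hy v hvy
    by_cases hvX : v ∈ X
    · exact dQR v hvX ⟨hvQ, hvR⟩
    · have h1 : gQ v = t := by rw [← hxt]; exact DQ.tag x hx v hvx hvX
      have h2 : gR v = t := by rw [← hyt]; exact DR.tag y hy v hvy hvX
      exact (hdist v).2.2 (h1.trans h2.symm)
  have nsQP : ∀ (t : Fin 3), ∀ x ∈ DQ.L, ∀ y ∈ DP.L, x.t = t → y.t = t → NS x y :=
    fun t x hx y hy hxt hyt => (nsPQ t y hy x hx hyt hxt).symm'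
  have nsRP : ∀ (t : Fin 3), ∀ x ∈ DR.L, ∀ y ∈ DP.L, x.t = t → y.t = t → NS x y :=
    fun t x hx y hy hxt hyt => (nsPR t y hy x hx hyt hxt).symm'
  have nsRQ : ∀ (t : Fin 3), ∀ x ∈ DR.L, ∀ y ∈ DQ.L, x.t = t → y.t = t → NS x y :=
    fun t x hx y hy hxt hyt => (nsQR t y hy x hx hyt hxt).symm'
  -- head/last tags
  have hPhead : ∀ h, DP.L.head? = some h → h.t = 2 :=
    fun h hh => (DP.headT h hh hp₁X).trans hgPp₁
  have hPlast : ∀ z, DP.L.getLast? = some z → z.t = 2 :=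
    fun z hz => (DP.lastT z hz).trans hgPp₂
  have hQhead : ∀ h, DQ.L.head? = some h → h.t = 0 :=
    fun h hh => (DQ.headT h hh hq₁X).trans hgQq₁
  have hQlast : ∀ z, DQ.L.getLast? = some z → z.t = 0 :=
    fun z hz => (DQ.lastT z hz).trans hgQq₂
  have hRhead : ∀ h, DR.L.head? = some h → h.t = 1 :=
    fun h hh => (DR.headT h hh hr₁X).trans hgRr₁
  have hRlast : ∀ z, DR.L.getLast? = some z → z.t = 1 :=
    fun z hz => (DR.lastT z hz).trans hgRr₂
  -- three reassembled paths
  obtain ⟨u₀, c₀, N₀, hN₀path, hN₀len⟩ :=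
    target_path hX 0 DQ DP DR twoQ hQhead hQlast
      (fun h hh => by rw [hPhead h hh]; simp)
      (fun z hz => by rw [hPlast z hz]; simp)
      (fun h hh => by rw [hRhead h hh]; simp)
      (fun z hz => by rw [hRlast z hz]; simp)
      (nsQP 0) (nsQR 0) (nsPR 0)
  obtain ⟨u₁, c₁, N₁, hN₁path, hN₁len⟩ :=
    target_path hX 1 DR DQ DP twoR hRhead hRlast
      (fun h hh => by rw [hQhead h hh]; simp)
      (fun z hz => by rw [hQlast z hz]; simp)
      (fun h hh => by rw [hPhead h hh]; simp)
      (fun z hz => by rw [hPlast z hz]; simp)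
      (nsRQ 1) (nsRP 1) (nsQP 1)
  obtain ⟨u₂, c₂, N₂, hN₂path, hN₂len⟩ :=
    target_path hX 2 DP DR DQ twoP hPhead hPlast
      (fun h hh => by rw [hRhead h hh]; simp)
      (fun z hz => by rw [hRlast z hz]; simp)
      (fun h hh => by rw [hQhead h hh]; simp)
      (fun z hz => by rw [hQlast z hz]; simp)
      (nsPR 2) (nsPQ 2) (nsRQ 2)
  -- length bounds
  have hb₀ : N₀.length ≤ P.length := hP.2 N₀ hN₀path
  have hb₁ : N₁.length ≤ P.length := hP.2 N₁ hN₁path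
  have hb₂ : N₂.length ≤ P.length := hP.2 N₂ hN₂path
  have hPQlen : P.length ≤ Q.length := hQ.2 P hP.1
  have hPRlen : P.length ≤ R.length := hR.2 P hP.1
  -- partition identities
  obtain ⟨cntP, lenP⟩ := filter_partition DP.L
  obtain ⟨cntQ, lenQ⟩ := filter_partition DQ.L
  obtain ⟨cntR, lenR⟩ := filter_partition DR.L
  have hPt := DP.total
  have hQt := DQ.total
  have hRt := DR.total
  omega
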